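/- arXiv:1603.05359 — 2 statements merged into one kernel-verified Lean document; each statement's English description precedes it below -/
import Mathlib

section
/- Let σ > 0, d ≥ 1, and let x_1, x_2, ... , x_T be vectors in ℝ^d with ‖x_s‖₂ ≤ 1. Define M_0 = I_d and M_s = M_{s−1} + σ^{-2} x_s x_sᵀ, and set z_s = √(x_sᵀ M_{s−1}^{-1} x_s). Then ∑_{s=1}^T log(1 + z_s²/σ²) ≤ d · log(1 + T/(d σ²)). -/
open Matrix

lemma posSemidef_smul_vecMulVec {d : ℕ} (c : ℝ) (hc : 0 ≤ c) (v : Fin d → ℝ) :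
    (c • vecMulVec v v).PosSemidef := by
  refine posSemidef_iff_dotProduct_mulVec.mpr ⟨?_, ?_⟩
  · ext i j
    simp [Matrix.conjTranspose_apply, Matrix.smul_apply, vecMulVec_apply, mul_comm]
  · intro y
    have : (star y) ⬝ᵥ ((c • vecMulVec v v) *ᵥ y) = c * (v ⬝ᵥ y) ^ 2 := by
      simp only [star_trivial, smul_mulVec, dotProduct_smul, smul_eq_mul]
      congr 1
      simp only [dotProduct, mulVec, vecMulVec_apply, pow_two, Finset.sum_mul,
        Finset.mul_sum, dotProduct]
      rw [Finset.sum_comm]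
      apply Finset.sum_congr rfl; intro i _
      apply Finset.sum_congr rfl; intro j _
      ring
    rw [this]
    positivity

lemma trace_vecMulVec {d : ℕ} (v : Fin d → ℝ) : (vecMulVec v v).trace = v ⬝ᵥ v := by
  simp [Matrix.trace, Matrix.diag, vecMulVec_apply, dotProduct]

lemma trace_eq_sum_eigenvalues {d : ℕ} {A : Matrix (Fin d) (Fin d) ℝ}
    (hA : A.IsHermitian) : A.trace = ∑ i, hA.eigenvalues i := by
  set U : Matrix (Fin d) (Fin d) ℝ := (IsHermitian.eigenvectorUnitary hA : Matrix (Fin d) (Fin d) ℝ)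
  calc A.trace = (U * diagonal (RCLike.ofReal ∘ hA.eigenvalues) * star U).trace := by
        exact congrArg trace hA.spectral_theorem
    _ = ((star U * U) * diagonal (RCLike.ofReal ∘ hA.eigenvalues)).trace := by
        rw [trace_mul_comm, mul_assoc]
    _ = ∑ i, hA.eigenvalues i := by
        rw [(Matrix.mem_unitaryGroup_iff').mp (IsHermitian.eigenvectorUnitary hA).2, one_mul,
          trace_diagonal]
        simp

lemma det_update {d : ℕ} {A : Matrix (Fin d) (Fin d) ℝ} (hA : A.PosDef) (c : ℝ) (v : Fin d → ℝ) :
    (A + c • vecMulVec v v).det = A.det * (1 + c * (v ⬝ᵥ A⁻¹ *ᵥ v)) := by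
  have h1 : c • vecMulVec v v = replicateCol (Fin 1) (c • v) * replicateRow (Fin 1) v := by
    erw [← vecMulVec_eq (Fin 1) (c • v) v]
    ext i j; simp [vecMulVec_apply, Matrix.smul_apply]; ring
  rw [h1, det_add_mul _ _ hA.det_pos.ne'.isUnit]
  have h2 : (1 + replicateRow (Fin 1) v * A⁻¹ * replicateCol (Fin 1) (c • v)).det
      = ((1 + replicateRow (Fin 1) v * A⁻¹ * replicateCol (Fin 1) (c • v) : Matrix (Fin 1) (Fin 1) ℝ)) 0 0 :=
    det_fin_one _
  rw [h2]
  congr 1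
  simp only [Matrix.add_apply, Matrix.one_apply_eq, Matrix.mul_apply, replicateRow_apply, replicateCol_apply,
    Pi.smul_apply, smul_eq_mul, dotProduct, mulVec, Finset.mul_sum, Finset.sum_mul]
  congr 1
  rw [Finset.sum_comm]
  exact Finset.sum_congr rfl fun i _ => Finset.sum_congr rfl fun j _ => by ring

theorem sum_log_potential_bound (d T : ℕ) (hd : 1 ≤ d) (σ : ℝ) (hσ : 0 < σ)
    (x : ℕ → Fin d → ℝ) (hx : ∀ s ∈ Finset.Icc 1 T, Real.sqrt (x s ⬝ᵥ x s) ≤ 1)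
    (M : ℕ → Matrix (Fin d) (Fin d) ℝ) (hM0 : M 0 = 1)
    (hMrec : ∀ s, M (s + 1) = M s + (σ ^ 2)⁻¹ • vecMulVec (x (s + 1)) (x (s + 1)))
    (z : ℕ → ℝ) (hz : ∀ s, z s = Real.sqrt (x s ⬝ᵥ (M (s - 1))⁻¹ *ᵥ x s)) :
    ∑ s ∈ Finset.Icc 1 T, Real.log (1 + (z s) ^ 2 / σ ^ 2) ≤
      d * Real.log (1 + T / (d * σ ^ 2)) := by
  have hσ2 : (0:ℝ) < σ ^ 2 := by positivity
  have hd' : (0:ℝ) < d := by exact_mod_cast hd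
  -- all M s are positive definite
  have hPD : ∀ s, (M s).PosDef := by
    intro s
    induction s with
    | zero => rw [hM0]; exact Matrix.PosDef.one
    | succ n ih =>
      rw [hMrec n]
      exact ih.add_posSemidef (posSemidef_smul_vecMulVec _ (by positivity) _)
  set q : ℕ → ℝ := fun s => x s ⬝ᵥ (M (s - 1))⁻¹ *ᵥ x s with hq
  have hqnonneg : ∀ s, 0 ≤ q s := fun s => by
    simpa using ((hPD (s - 1)).posSemidef.inv).dotProduct_mulVec_nonneg (x s)
  have hzsq : ∀ s, (z s) ^ 2 = q s := fun s => by
    rw [hz s, Real.sq_sqrt (hqnonneg s)]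
  -- determinant as a product
  have hdet : ∀ s, (M s).det = ∏ t ∈ Finset.Icc 1 s, (1 + (σ ^ 2)⁻¹ * q t) := by
    intro s
    induction s with
    | zero => simp [hM0]
    | succ n ih =>
      rw [hMrec n, det_update (hPD n), ih,
        Finset.prod_Icc_succ_top (Nat.le_add_left 1 n)]
      congr 1
  -- trace as a sum
  have htr : ∀ s, (M s).trace = d + (σ ^ 2)⁻¹ * ∑ t ∈ Finset.Icc 1 s, (x t ⬝ᵥ x t) := by
    intro s
    induction s with
    | zero => simp [hM0]
    | succ n ih =>
      rw [hMrec n, trace_add, trace_smul, _root_.trace_vecMulVec, ih,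
        Finset.sum_Icc_succ_top (by omega)]
      simp [mul_add]; ring
  -- trace bound
  have hxx : ∀ t ∈ Finset.Icc 1 T, x t ⬝ᵥ x t ≤ 1 := by
    intro t ht
    have h0 : 0 ≤ x t ⬝ᵥ x t := Finset.sum_nonneg fun i _ => mul_self_nonneg _
    calc x t ⬝ᵥ x t = (Real.sqrt (x t ⬝ᵥ x t)) ^ 2 := (Real.sq_sqrt h0).symm
      _ ≤ 1 := pow_le_one₀ (Real.sqrt_nonneg _) (hx t ht)
  have htrace_le : (M T).trace ≤ d + (σ ^ 2)⁻¹ * T := by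
    rw [htr T]
    gcongr
    calc ∑ t ∈ Finset.Icc 1 T, (x t ⬝ᵥ x t) ≤ ∑ t ∈ Finset.Icc 1 T, (1:ℝ) :=
          Finset.sum_le_sum hxx
      _ ≤ T := by simp [Nat.card_Icc]
  -- eigenvalues
  have hH : (M T).IsHermitian := (hPD T).1
  set lam : Fin d → ℝ := hH.eigenvalues with hlam
  have hlampos : ∀ i, 0 < lam i := fun i => (hPD T).eigenvalues_pos i
  have hdet_eq : (M T).det = ∏ i, lam i := by
    simpa using hH.det_eq_prod_eigenvalues
  have htr_eq : (M T).trace = ∑ i, lam i := trace_eq_sum_eigenvalues hH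
  have htrpos : 0 < (M T).trace := by
    rw [htr_eq]
    exact Finset.sum_pos (fun i _ => hlampos i)
      (Finset.univ_nonempty_iff.mpr ⟨⟨0, hd⟩⟩)
  -- LHS equals log det
  have hterm_pos : ∀ t, (0:ℝ) < 1 + (σ ^ 2)⁻¹ * q t := fun t => by
    have := hqnonneg t; positivity
  have hlhs : ∑ s ∈ Finset.Icc 1 T, Real.log (1 + (z s) ^ 2 / σ ^ 2)
      = Real.log ((M T).det) := by
    rw [hdet T, Real.log_prod (fun t _ => (hterm_pos t).ne')]
    refine Finset.sum_congr rfl fun s _ => ?_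
    rw [hzsq s, div_eq_inv_mul]
  -- AM-GM
  have hw : ∑ _i : Fin d, ((d:ℝ)⁻¹) = 1 := by
    simp [Finset.card_univ]
    field_simp
  have amgm := Real.geom_mean_le_arith_mean_weighted Finset.univ (fun _ => (d:ℝ)⁻¹) lam
    (fun i _ => by positivity) hw (fun i _ => (hlampos i).le)
  have hprodpos : 0 < ∏ i, lam i ^ ((d:ℝ)⁻¹) :=
    Finset.prod_pos fun i _ => Real.rpow_pos_of_pos (hlampos i) _
  have hsum_eq : ∑ i, ((d:ℝ)⁻¹) * lam i = (d:ℝ)⁻¹ * (M T).trace := by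
    rw [htr_eq, Finset.mul_sum]
  have hlog_amgm : (d:ℝ)⁻¹ * Real.log ((M T).det) ≤ Real.log ((d:ℝ)⁻¹ * (M T).trace) := by
    have h1 := Real.log_le_log hprodpos amgm
    rw [hsum_eq] at h1
    have h2 : Real.log (∏ i, lam i ^ ((d:ℝ)⁻¹)) = (d:ℝ)⁻¹ * Real.log ((M T).det) := by
      rw [Real.log_prod (fun i _ => (Real.rpow_pos_of_pos (hlampos i) _).ne'),
        hdet_eq, Real.log_prod (fun i _ => (hlampos i).ne'), Finset.mul_sum]
      exact Finset.sum_congr rfl fun i _ => Real.log_rpow (hlampos i) _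
    rwa [h2] at h1
  have hfinal1 : Real.log ((M T).det) ≤ (d:ℝ) * Real.log ((d:ℝ)⁻¹ * (M T).trace) := by
    have := mul_le_mul_of_nonneg_left hlog_amgm hd'.le
    rwa [← mul_assoc, mul_inv_cancel₀ hd'.ne', one_mul] at this
  have hfinal2 : (d:ℝ)⁻¹ * (M T).trace ≤ 1 + T / (d * σ ^ 2) := by
    have h3 : (d:ℝ)⁻¹ * ((d:ℝ) + (σ ^ 2)⁻¹ * T) = 1 + T / (d * σ ^ 2) := by
      field_simp
    calc (d:ℝ)⁻¹ * (M T).trace ≤ (d:ℝ)⁻¹ * ((d:ℝ) + (σ ^ 2)⁻¹ * T) := by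
          gcongr
      _ = 1 + T / (d * σ ^ 2) := h3
  calc ∑ s ∈ Finset.Icc 1 T, Real.log (1 + (z s) ^ 2 / σ ^ 2)
      = Real.log ((M T).det) := hlhs
    _ ≤ (d:ℝ) * Real.log ((d:ℝ)⁻¹ * (M T).trace) := hfinal1
    _ ≤ (d:ℝ) * Real.log (1 + T / (d * σ ^ 2)) :=
        mul_le_mul_of_nonneg_left (Real.log_le_log (by positivity) hfinal2) hd'.le
end

section
/- For any K-tuple A = (a_1,...,a_K) and weights w : E → {0,1}, writing f(A,w) = 1 − ∏_{k=1}^K (1 − w(a_k)), the difference f(A*, w) − f(A, w) for any two K-tuples A*, A of distinct items satisfies f(A*,w) − f(A,w) ≤ ∑_{k=1}^K [∏_{i=1}^{k−1}(1 − w(a_i))]·(w(a*_k) − w(a_k)). -/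
open Finset

lemma cascade_aux (a b : ℕ → ℝ) (ha0 : ∀ n, 0 ≤ a n) (ha1 : ∀ n, a n ≤ 1)
    (hb0 : ∀ n, 0 ≤ b n) (hb1 : ∀ n, b n ≤ 1) (hab : ∀ n, b n ≤ a n) (K : ℕ) :
    ∏ k ∈ range K, a k - ∏ k ∈ range K, b k ≤
      ∑ k ∈ range K, (∏ i ∈ range k, a i) * (a k - b k) := by
  induction K with
  | zero => simp
  | succ K ih =>
    rw [prod_range_succ, prod_range_succ, sum_range_succ]
    have hPa0 : 0 ≤ ∏ k ∈ range K, a k := prod_nonneg fun i _ => ha0 i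
    have hPb : ∏ k ∈ range K, b k ≤ ∏ k ∈ range K, a k :=
      prod_le_prod (fun i _ => hb0 i) (fun i _ => hab i)
    have key : (∏ k ∈ range K, a k) * a K - (∏ k ∈ range K, b k) * b K ≤
        (∏ k ∈ range K, a k - ∏ k ∈ range K, b k) +
          (∏ i ∈ range K, a i) * (a K - b K) := by
      have h1 : (∏ k ∈ range K, a k - ∏ k ∈ range K, b k) * b K ≤
          ∏ k ∈ range K, a k - ∏ k ∈ range K, b k := by
        nlinarith [hb0 K, hb1 K, hPb]
      nlinarith [hb0 K, hb1 K, hPb, hPa0]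
    linarith [key, ih]

theorem cascade_regret_decomposition (E : Type*) (K : ℕ) (w : E → ℝ)
    (hw0 : ∀ e, 0 ≤ w e) (hw1 : ∀ e, w e ≤ 1)
    (A Astar : Fin K → E) (hbc : ∀ k, w (A k) ≤ w (Astar k)) :
    (1 - ∏ k : Fin K, (1 - w (Astar k))) - (1 - ∏ k : Fin K, (1 - w (A k))) ≤
      ∑ k : Fin K, (∏ i ∈ Finset.Iio k, (1 - w (A i))) * (w (Astar k) - w (A k)) := by
  set a : ℕ → ℝ := fun n => if h : n < K then 1 - w (A ⟨n, h⟩) else 1 with ha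
  set b : ℕ → ℝ := fun n => if h : n < K then 1 - w (Astar ⟨n, h⟩) else 1 with hb
  have haval : ∀ k : Fin K, a k = 1 - w (A k) := by
    intro k; simp [ha, k.is_lt]
  have hbval : ∀ k : Fin K, b k = 1 - w (Astar k) := by
    intro k; simp [hb, k.is_lt]
  have hPA : ∏ k : Fin K, (1 - w (A k)) = ∏ k ∈ range K, a k := by
    rw [← Fin.prod_univ_eq_prod_range]
    exact prod_congr rfl fun k _ => (haval k).symm
  have hPB : ∏ k : Fin K, (1 - w (Astar k)) = ∏ k ∈ range K, b k := by
    rw [← Fin.prod_univ_eq_prod_range]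
    exact prod_congr rfl fun k _ => (hbval k).symm
  have hIio : ∀ k : Fin K, ∏ i ∈ Finset.Iio k, (1 - w (A i)) = ∏ i ∈ range k.val, a i := by
    intro k
    rw [← Nat.Iio_eq_range, ← Fin.map_valEmbedding_Iio, prod_map]
    exact prod_congr rfl fun i _ => (haval i).symm
  have hsum : ∑ k : Fin K, (∏ i ∈ Finset.Iio k, (1 - w (A i))) * (w (Astar k) - w (A k)) =
      ∑ k ∈ range K, (∏ i ∈ range k, a i) * (a k - b k) := by
    rw [← Fin.sum_univ_eq_sum_range (fun k => (∏ i ∈ range k, a i) * (a k - b k)) K]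
    refine sum_congr rfl fun k _ => ?_
    rw [hIio k, haval k, hbval k]; ring_nf
  have key := cascade_aux a b
    (by intro n; by_cases h : n < K <;> simp [ha, h] <;> linarith [hw1 (A ⟨n, h⟩)])
    (by intro n; by_cases h : n < K <;> simp [ha, h] <;> linarith [hw0 (A ⟨n, h⟩)])
    (by intro n; by_cases h : n < K <;> simp [hb, h] <;> linarith [hw1 (Astar ⟨n, h⟩)])
    (by intro n; by_cases h : n < K <;> simp [hb, h] <;> linarith [hw0 (Astar ⟨n, h⟩)])
    (by intro n; by_cases h : n < K <;> simp [ha, hb, h] <;> linarith [hbc ⟨n, h⟩]) K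
  rw [hPA, hPB, hsum]
  linarith [key]
end
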